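/- Let f : [a,b] → ℝ be continuous on [a,b] and differentiable at every point of [a,b] except possibly at countably many points. Then for every ε > 0 there exists a positive gauge δ on [a,b] such that for every δ-fine tagged partition (([t_{j-1},tⱼ], xⱼ))_{j=1}^p of [a,b], one has |Σⱼ g(xⱼ)(tⱼ - t_{j-1}) - (f(b) - f(a))| < ε, where g(x) = f'(x) at differentiability points and g(x) = 0 elsewhere. -/

import Mathlib

def IsTaggedPartition (a b : ℝ) (n : ℕ) (t x : ℕ → ℝ) : Prop :=
  t 0 = a ∧ t n = b ∧ (∀ j < n, t j < t (j + 1)) ∧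
    ∀ j < n, x j ∈ Set.Icc (t j) (t (j + 1))

def IsFine (δ : ℝ → ℝ) (n : ℕ) (t x : ℕ → ℝ) : Prop :=
  ∀ j < n, t (j + 1) - t j < δ (x j)

/-- Riemann sum of `g` over the tagged partition `(n, t, x)`. -/
def RiemannSum (g : ℝ → ℝ) (n : ℕ) (t x : ℕ → ℝ) : ℝ :=
  ∑ j ∈ Finset.range n, g (x j) * (t (j + 1) - t j)

/-- Fundamental theorem: if `f` is continuous on `[a,b]` and differentiable outside a
countable set `D`, then the (redefined) derivative `g` is Henstock–Kurzweil integrable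
with integral `f b - f a`. -/
theorem hk_ftc_countable_exceptional (a b : ℝ) (hab : a ≤ b) (f g : ℝ → ℝ)
    (D : Set ℝ) (hD : D.Countable)
    (hf : ContinuousOn f (Set.Icc a b))
    (hdiff : ∀ x ∈ Set.Icc a b \ D, HasDerivWithinAt f (g x) (Set.Icc a b) x)
    (hg0 : ∀ x ∈ D, g x = 0) :
    ∀ ε > 0, ∃ δ : ℝ → ℝ, (∀ y ∈ Set.Icc a b, 0 < δ y) ∧
      ∀ (n : ℕ) (t x : ℕ → ℝ), IsTaggedPartition a b n t x → IsFine δ n t x →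
        |RiemannSum g n t x - (f b - f a)| < ε := by
  classical
  intro ε hε
  obtain ⟨ι, hι⟩ := Set.countable_iff_exists_injOn.mp hD
  have hba : (0:ℝ) ≤ b - a := by linarith
  set c : ℝ := ε / (2*(b-a) + 2) with hc_def
  have hc : 0 < c := div_pos hε (by linarith)
  set w : ℝ → ℝ := fun v => ε * (1/2:ℝ)^(ι v) / 16 with hw_def
  have hw : ∀ v, 0 < w v := fun v => by positivity
  have key : ∀ x ∈ Set.Icc a b, ∃ d, 0 < d ∧ ∀ y ∈ Set.Icc a b, |y - x| < d →
      (x ∈ D → |f y - f x| ≤ w x) ∧ (x ∉ D → |f y - f x - g x * (y - x)| ≤ c * |y - x|) := by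
    intro x hx
    by_cases hxD : x ∈ D
    · have hcont := hf x hx
      rw [Metric.continuousWithinAt_iff] at hcont
      obtain ⟨d, hd, hball⟩ := hcont (w x) (hw x)
      refine ⟨d, hd, fun y hy hyd => ⟨fun _ => ?_, fun h => absurd hxD h⟩⟩
      have := hball hy (by rwa [Real.dist_eq])
      rw [Real.dist_eq] at this
      exact this.le
    · have hder := hdiff x ⟨hx, hxD⟩
      rw [hasDerivWithinAt_iff_isLittleO] at hder
      have hev := hder.def hc
      obtain ⟨d, hd, hsub⟩ := Metric.mem_nhdsWithin_iff.mp hev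
      refine ⟨d, hd, fun y hy hyd => ⟨fun h => absurd h hxD, fun _ => ?_⟩⟩
      have hyb : y ∈ Metric.ball x d ∩ Set.Icc a b :=
        ⟨by rwa [Metric.mem_ball, Real.dist_eq], hy⟩
      have := hsub hyb
      simp only [Set.mem_setOf_eq, Real.norm_eq_abs, smul_eq_mul] at this
      calc |f y - f x - g x * (y - x)| = |f y - f x - (y - x) * g x| := by ring_nf
        _ ≤ c * |y - x| := this
  choose! δ hδpos hδprop using key
  refine ⟨δ, hδpos, ?_⟩
  rintro n t x ⟨ht0, htn, hlt, hmem⟩ hfine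
  have tmono : ∀ j k, j ≤ k → k ≤ n → t j ≤ t k := by
    intro j k hjk hkn
    induction k with
    | zero =>
      have : j = 0 := Nat.le_zero.mp hjk
      rw [this]
    | succ m ih =>
      rcases Nat.lt_or_ge j (m+1) with h | h
      · have h1 : t j ≤ t m := ih (Nat.lt_succ_iff.mp h) (le_trans (Nat.le_succ m) hkn)
        exact h1.trans (hlt m (lt_of_lt_of_le (Nat.lt_succ_self m) hkn)).le
      · have : j = m + 1 := le_antisymm hjk h
        rw [this]
  have txab : ∀ j, j ≤ n → t j ∈ Set.Icc a b := fun j hj =>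
    ⟨ht0 ▸ tmono 0 j (Nat.zero_le j) hj, htn ▸ tmono j n hj le_rfl⟩
  have xab : ∀ j, j < n → x j ∈ Set.Icc a b := fun j hj =>
    ⟨le_trans (txab j hj.le).1 (hmem j hj).1, le_trans (hmem j hj).2 (txab (j+1) hj).2⟩
  have hE : ∀ j ∈ Finset.range n,
      |g (x j) * (t (j+1) - t j) - (f (t (j+1)) - f (t j))|
        ≤ (if x j ∈ D then 2 * w (x j) else c * (t (j+1) - t j)) := by
    intro j hj
    rw [Finset.mem_range] at hj
    have hxj := xab j hj
    have hxm := hmem j hj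
    have hfj := hfine j hj
    have h1 : |t (j+1) - x j| < δ (x j) := by
      rw [abs_of_nonneg (by linarith [hxm.1, hxm.2])]
      linarith [hxm.1]
    have h2 : |t j - x j| < δ (x j) := by
      rw [abs_of_nonpos (by linarith [hxm.1])]
      linarith [hxm.2]
    have Q1 := hδprop (x j) hxj (t (j+1)) (txab (j+1) hj) h1
    have Q2 := hδprop (x j) hxj (t j) (txab j hj.le) h2
    by_cases hxD : x j ∈ D
    · rw [if_pos hxD, hg0 (x j) hxD]
      have e1 := Q1.1 hxD
      have e2 := Q2.1 hxD
      rw [show (0:ℝ) * (t (j+1) - t j) - (f (t (j+1)) - f (t j))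
          = -((f (t (j+1)) - f (x j)) - (f (t j) - f (x j))) from by ring, abs_neg]
      calc |(f (t (j+1)) - f (x j)) - (f (t j) - f (x j))|
          ≤ |f (t (j+1)) - f (x j)| + |f (t j) - f (x j)| := abs_sub _ _
        _ ≤ w (x j) + w (x j) := add_le_add e1 e2
        _ = 2 * w (x j) := by ring
    · rw [if_neg hxD]
      have e1 := Q1.2 hxD
      have e2 := Q2.2 hxD
      rw [show g (x j) * (t (j+1) - t j) - (f (t (j+1)) - f (t j))
          = (f (t j) - f (x j) - g (x j) * (t j - x j))
            - (f (t (j+1)) - f (x j) - g (x j) * (t (j+1) - x j)) from by ring]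
      refine le_trans (abs_sub _ _) ?_
      have habs1 : |t (j+1) - x j| = t (j+1) - x j :=
        abs_of_nonneg (by linarith [hxm.2])
      have habs2 : |t j - x j| = -(t j - x j) :=
        abs_of_nonpos (by linarith [hxm.1])
      calc |f (t j) - f (x j) - g (x j) * (t j - x j)|
            + |f (t (j+1)) - f (x j) - g (x j) * (t (j+1) - x j)|
          ≤ c * |t j - x j| + c * |t (j+1) - x j| := add_le_add e2 e1
        _ = c * (t (j+1) - t j) := by rw [habs1, habs2]; ring
  have hsum : RiemannSum g n t x - (f b - f a)
      = ∑ j ∈ Finset.range n,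
          (g (x j) * (t (j+1) - t j) - (f (t (j+1)) - f (t j))) := by
    rw [Finset.sum_sub_distrib, RiemannSum]
    congr 1
    rw [Finset.sum_range_sub (fun j => f (t j)), ht0, htn]
  set S := (Finset.range n).filter (fun j => x j ∈ D) with hS_def
  have hadj : ∀ v, ∀ j ∈ S.filter (fun j => x j = v),
      ∀ j' ∈ S.filter (fun j => x j = v), j < j' → j' = j + 1 := by
    intro v j hj j' hj' hlt'
    obtain ⟨hjS, hjv⟩ := Finset.mem_filter.mp hj
    obtain ⟨hj'S, hj'v⟩ := Finset.mem_filter.mp hj'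
    have hjn : j < n := Finset.mem_range.mp (Finset.mem_filter.mp hjS).1
    have hj'n : j' < n := Finset.mem_range.mp (Finset.mem_filter.mp hj'S).1
    by_contra hne
    have h2 : j + 2 ≤ j' := by omega
    have hlt2 : t (j+1) < t j' :=
      lt_of_lt_of_le (hlt (j+1) (by omega)) (tmono (j+2) j' h2 hj'n.le)
    have hv1 : v ≤ t (j+1) := hjv ▸ (hmem j hjn).2
    have hv2 : t j' ≤ v := hj'v ▸ (hmem j' hj'n).1
    linarith
  have hcard : ∀ v, (S.filter (fun j => x j = v)).card ≤ 2 := by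
    intro v
    by_cases hne : (S.filter (fun j => x j = v)).Nonempty
    · set T := S.filter (fun j => x j = v) with hT
      set m := T.min' hne with hm
      have hsub : T ⊆ {m, m + 1} := by
        intro j hj
        rcases eq_or_lt_of_le (T.min'_le j hj) with h | h
        · rw [← h]; exact Finset.mem_insert_self _ _
        · have := hadj v m (T.min'_mem hne) j hj h
          simp [this]
      calc T.card ≤ ({m, m+1} : Finset ℕ).card := Finset.card_le_card hsub
        _ ≤ 2 := by
            refine le_trans (Finset.card_insert_le _ _) ?_
            simp
    · rw [Finset.not_nonempty_iff_eq_empty.mp hne]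
      simp
  have hVD : ∀ v ∈ S.image x, v ∈ D := by
    intro v hv
    obtain ⟨j, hj, rfl⟩ := Finset.mem_image.mp hv
    exact (Finset.mem_filter.mp hj).2
  have hgeo : ∑ v ∈ S.image x, (1/2:ℝ)^(ι v) ≤ 2 := by
    have h1 : ∑ v ∈ S.image x, (1/2:ℝ)^(ι v)
        = ∑ k ∈ (S.image x).image ι, (1/2:ℝ)^k :=
      (Finset.sum_image (fun u hu v hv h => hι (hVD u hu) (hVD v hv) h)).symm
    rw [h1]
    exact le_trans (Summable.sum_le_tsum _ (fun k _ => by positivity) summable_geometric_two)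
      tsum_geometric_two.le
  have hEx : ∑ j ∈ S, 2 * w (x j) ≤ ε / 2 := by
    calc ∑ j ∈ S, 2 * w (x j)
        = ∑ v ∈ S.image x, (S.filter (fun j => x j = v)).card • (2 * w v) :=
          Finset.sum_comp (fun v => 2 * w v) x
      _ ≤ ∑ v ∈ S.image x, 2 * (2 * w v) := by
          refine Finset.sum_le_sum (fun v _ => ?_)
          rw [nsmul_eq_mul]
          exact mul_le_mul_of_nonneg_right (by exact_mod_cast hcard v)
            (by positivity)
      _ = (ε/4) * ∑ v ∈ S.image x, (1/2:ℝ)^(ι v) := by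
          rw [Finset.mul_sum]
          refine Finset.sum_congr rfl (fun v _ => ?_)
          simp only [hw_def]; ring
      _ ≤ (ε/4) * 2 := by
          exact mul_le_mul_of_nonneg_left hgeo (by positivity)
      _ = ε / 2 := by ring
  have hReg : ∑ j ∈ (Finset.range n).filter (fun j => x j ∉ D),
      c * (t (j+1) - t j) ≤ c * (b - a) := by
    have h1 : ∑ j ∈ (Finset.range n).filter (fun j => x j ∉ D), c * (t (j+1) - t j)
        ≤ ∑ j ∈ Finset.range n, c * (t (j+1) - t j) := by
      refine Finset.sum_le_sum_of_subset_of_nonneg (Finset.filter_subset _ _) ?_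
      intro j hj _
      have := hlt j (Finset.mem_range.mp hj)
      have : 0 ≤ t (j+1) - t j := by linarith
      positivity
    calc _ ≤ ∑ j ∈ Finset.range n, c * (t (j+1) - t j) := h1
      _ = c * (b - a) := by
          rw [← Finset.mul_sum, Finset.sum_range_sub (fun j => t j), ht0, htn]
  have hcba : c * (b - a) < ε / 2 := by
    rw [hc_def, div_mul_eq_mul_div, div_lt_div_iff₀ (by linarith) two_pos]
    nlinarith
  rw [hsum]
  calc |∑ j ∈ Finset.range n, (g (x j) * (t (j+1) - t j) - (f (t (j+1)) - f (t j)))|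
      ≤ ∑ j ∈ Finset.range n,
          |g (x j) * (t (j+1) - t j) - (f (t (j+1)) - f (t j))| :=
        Finset.abs_sum_le_sum_abs _ _
    _ ≤ ∑ j ∈ Finset.range n,
          (if x j ∈ D then 2 * w (x j) else c * (t (j+1) - t j)) :=
        Finset.sum_le_sum hE
    _ = (∑ j ∈ S, 2 * w (x j))
        + ∑ j ∈ (Finset.range n).filter (fun j => x j ∉ D), c * (t (j+1) - t j) :=
        Finset.sum_ite _ _
    _ ≤ ε / 2 + c * (b - a) := add_le_add hEx hReg
    _ < ε := by linarith
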